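/- Let N ≥ 3, λ > 0, let F : ℝ → ℝ be Borel measurable with G(s) := F(s) − (λ/2)s², and let u : EuclideanSpace ℝ (Fin N) → ℝ be differentiable such that ‖∇u‖², u² and F∘u are integrable, 0 < ∫_{ℝ^N} ‖∇u‖² dx, and ∫_{ℝ^N} G(u) dx > 0. Then there exists a unique t₀ > 0 such that the rescaled function u(·/t₀) satisfies the Pohozaev constraint (N−2) ∫_{ℝ^N} ‖∇(u(x/t₀))‖² dx = 2N ∫_{ℝ^N} G(u(x/t₀)) dx; this t₀ is given explicitly by t₀² = (N−2) ∫_{ℝ^N} ‖∇u‖² dx / (2N ∫_{ℝ^N} G(u) dx), and t₀ is the unique maximizer over (0,∞) of the map t ↦ I(u(·/t)). -/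

import Mathlib

open MeasureTheory


lemma fderiv_comp_smul_aux {N : ℕ} (u : EuclideanSpace ℝ (Fin N) → ℝ)
    (hu : Differentiable ℝ u) (c : ℝ) (x : EuclideanSpace ℝ (Fin N)) :
    fderiv ℝ (fun y => u (c • y)) x = c • fderiv ℝ u (c • x) := by
  have h1 : HasFDerivAt (fun y : EuclideanSpace ℝ (Fin N) => c • y)
      (c • ContinuousLinearMap.id ℝ (EuclideanSpace ℝ (Fin N))) x :=
    (hasFDerivAt_id x).const_smul c
  have h2 : HasFDerivAt (fun y => u (c • y)) (c • fderiv ℝ u (c • x)) x := by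
    have := (hu (c • x)).hasFDerivAt.comp x h1
    simpa [ContinuousLinearMap.comp_smul, Function.comp_def] using this
  exact h2.fderiv

lemma phi_strict_max {N : ℕ} (hN : 3 ≤ N) {A B t t₀ : ℝ} (hB : 0 < B)
    (ht₀ : 0 < t₀) (hsq : (N : ℝ) * B * t₀ ^ 2 = ((N : ℝ) - 2) * A)
    (ht : 0 < t) (hne : t ≠ t₀) :
    A * t ^ (N - 2) - B * t ^ N < A * t₀ ^ (N - 2) - B * t₀ ^ N := by
  set φ : ℝ → ℝ := fun s => A * s ^ (N - 2) - B * s ^ N with hφ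
  have hNpos : (0 : ℝ) < (N : ℝ) - 2 := by
    have : (3 : ℝ) ≤ N := by exact_mod_cast hN
    linarith
  have hder : ∀ s : ℝ, HasDerivAt φ
      (s ^ (N - 3) * (((N : ℝ) - 2) * A - (N : ℝ) * B * s ^ 2)) s := by
    intro s
    have h1 : HasDerivAt φ
        (A * (((N : ℝ) - 2) * s ^ (N - 2 - 1)) - B * ((N : ℝ) * s ^ (N - 1))) s := by
      have p1 := (hasDerivAt_pow (N - 2) s).const_mul A
      have p2 := (hasDerivAt_pow N s).const_mul B
      have := p1.sub p2
      refine this.congr_deriv ?_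
      push_cast [Nat.cast_sub (by omega : 2 ≤ N)]
      ring
    convert h1 using 1
    have e1 : N - 2 - 1 = N - 3 := by omega
    have e2 : s ^ (N - 1) = s ^ (N - 3) * s ^ 2 := by
      rw [← pow_add]; congr 1; omega
    rw [e1, e2]; ring
  have hderiv : ∀ s : ℝ, deriv φ s =
      s ^ (N - 3) * (((N : ℝ) - 2) * A - (N : ℝ) * B * s ^ 2) := fun s => (hder s).deriv
  have hcont : Continuous φ := by fun_prop
  rcases lt_or_gt_of_ne hne with hlt | hgt
  · have hmono : StrictMonoOn φ (Set.Icc t t₀) := by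
      apply strictMonoOn_of_deriv_pos (convex_Icc t t₀) hcont.continuousOn
      intro s hs
      rw [interior_Icc] at hs
      rw [hderiv]
      have hs0 : 0 < s := lt_trans ht hs.1
      have hs2 : s ^ 2 < t₀ ^ 2 := by
        apply pow_lt_pow_left₀ hs.2 hs0.le; omega
      have : (N : ℝ) * B * s ^ 2 < ((N : ℝ) - 2) * A := by
        calc (N : ℝ) * B * s ^ 2 < (N : ℝ) * B * t₀ ^ 2 := by
              apply mul_lt_mul_of_pos_left hs2
              positivity
          _ = ((N : ℝ) - 2) * A := hsq
      have hp : 0 < s ^ (N - 3) := pow_pos hs0 _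
      nlinarith
    exact hmono (Set.left_mem_Icc.2 hlt.le) (Set.right_mem_Icc.2 hlt.le) hlt
  · have hanti : StrictAntiOn φ (Set.Icc t₀ t) := by
      apply strictAntiOn_of_deriv_neg (convex_Icc t₀ t) hcont.continuousOn
      intro s hs
      rw [interior_Icc] at hs
      rw [hderiv]
      have hs0 : 0 < s := lt_trans ht₀ hs.1
      have hs2 : t₀ ^ 2 < s ^ 2 := by
        apply pow_lt_pow_left₀ hs.1 ht₀.le; omega
      have : ((N : ℝ) - 2) * A < (N : ℝ) * B * s ^ 2 := by
        calc ((N : ℝ) - 2) * A = (N : ℝ) * B * t₀ ^ 2 := hsq.symm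
          _ < (N : ℝ) * B * s ^ 2 := by
              apply mul_lt_mul_of_pos_left hs2; positivity
      have hp : 0 < s ^ (N - 3) := pow_pos hs0 _
      nlinarith
    exact hanti (Set.left_mem_Icc.2 hgt.le) (Set.right_mem_Icc.2 hgt.le) hgt

/-- Unique projection onto the Pohozaev manifold: if `∫‖∇u‖² > 0` and `∫G(u) > 0`,
there is a unique `t₀ > 0` such that `u(·/t₀)` satisfies the Pohozaev constraint;
`t₀² = (N−2)∫‖∇u‖² / (2N∫G(u))`, and `t₀` is the unique maximizer of `t ↦ I(u(·/t))`
over `(0,∞)`. -/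
theorem pohozaev_projection {N : ℕ} (hN : 3 ≤ N)
    (lam : ℝ) (hlam : 0 < lam)
    (F G : ℝ → ℝ) (hF : Measurable F)
    (hG : ∀ s : ℝ, G s = F s - lam / 2 * s ^ 2)
    (u : EuclideanSpace ℝ (Fin N) → ℝ) (hu : Differentiable ℝ u)
    (hgrad : Integrable (fun x => ‖fderiv ℝ u x‖ ^ 2))
    (hsq : Integrable (fun x => (u x) ^ 2))
    (hFu : Integrable (fun x => F (u x)))
    (hgradpos : 0 < ∫ x, ‖fderiv ℝ u x‖ ^ 2)
    (hGpos : 0 < ∫ x, G (u x)) :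
    ∃ t₀ : ℝ, 0 < t₀ ∧
      (((N : ℝ) - 2) * ∫ x, ‖fderiv ℝ (fun y => u (t₀⁻¹ • y)) x‖ ^ 2 =
        2 * (N : ℝ) * ∫ x, G (u (t₀⁻¹ • x))) ∧
      (∀ t : ℝ, 0 < t →
        (((N : ℝ) - 2) * ∫ x, ‖fderiv ℝ (fun y => u (t⁻¹ • y)) x‖ ^ 2 =
          2 * (N : ℝ) * ∫ x, G (u (t⁻¹ • x))) → t = t₀) ∧
      t₀ ^ 2 = ((N : ℝ) - 2) * (∫ x, ‖fderiv ℝ u x‖ ^ 2) /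
        (2 * (N : ℝ) * ∫ x, G (u x)) ∧
      (∀ t : ℝ, 0 < t → t ≠ t₀ →
        ((1 : ℝ) / 2) *
            (∫ x, (‖fderiv ℝ (fun y => u (t⁻¹ • y)) x‖ ^ 2 + lam * (u (t⁻¹ • x)) ^ 2)) -
          (∫ x, F (u (t⁻¹ • x))) <
        ((1 : ℝ) / 2) *
            (∫ x, (‖fderiv ℝ (fun y => u (t₀⁻¹ • y)) x‖ ^ 2 + lam * (u (t₀⁻¹ • x)) ^ 2)) -
          ∫ x, F (u (t₀⁻¹ • x))) := by
  set a : ℝ := ∫ x, ‖fderiv ℝ u x‖ ^ 2 with ha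
  set b : ℝ := ∫ x, G (u x) with hbdef
  set S : ℝ := ∫ x, (u x) ^ 2 with hSdef
  set Fi : ℝ := ∫ x, F (u x) with hFidef
  have hNpos : (0 : ℝ) < (N : ℝ) - 2 := by
    have : (3 : ℝ) ≤ N := by exact_mod_cast hN
    linarith
  have hNR : (0 : ℝ) < (N : ℝ) := by positivity
  -- scaling identities
  have hcomp : ∀ (f : EuclideanSpace ℝ (Fin N) → ℝ) {t : ℝ}, 0 < t →
      ∫ x, f (t⁻¹ • x) = t ^ N * ∫ x, f x := by
    intro f t ht
    rw [Measure.integral_comp_inv_smul_of_nonneg volume f ht.le, finrank_euclideanSpace_fin,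
      smul_eq_mul]
  have hkeyfun : ∀ (t : ℝ) (x : EuclideanSpace ℝ (Fin N)),
      ‖fderiv ℝ (fun y => u (t⁻¹ • y)) x‖ ^ 2 = (t⁻¹) ^ 2 * ‖fderiv ℝ u (t⁻¹ • x)‖ ^ 2 := by
    intro t x
    rw [fderiv_comp_smul_aux u hu, norm_smul, Real.norm_eq_abs, mul_pow, sq_abs]
  have hgradI : ∀ {t : ℝ}, 0 < t →
      ∫ x, ‖fderiv ℝ (fun y => u (t⁻¹ • y)) x‖ ^ 2 = t ^ (N - 2) * a := by
    intro t ht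
    simp_rw [hkeyfun t]
    rw [integral_const_mul, hcomp (fun x => ‖fderiv ℝ u x‖ ^ 2) ht, ← ha]
    have hp : t ^ (N - 2) * t ^ 2 = t ^ N := by rw [← pow_add]; congr 1; omega
    have ht2 : (t : ℝ) ^ 2 ≠ 0 := by positivity
    field_simp
    linear_combination (-1) * hp
  have hGI : ∀ {t : ℝ}, 0 < t → ∫ x, G (u (t⁻¹ • x)) = t ^ N * b :=
    fun {t} ht => hcomp (fun x => G (u x)) ht
  have hFI : ∀ {t : ℝ}, 0 < t → ∫ x, F (u (t⁻¹ • x)) = t ^ N * Fi :=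
    fun {t} ht => hcomp (fun x => F (u x)) ht
  have hSI : ∀ {t : ℝ}, 0 < t → ∫ x, (u (t⁻¹ • x)) ^ 2 = t ^ N * S :=
    fun {t} ht => hcomp (fun x => (u x) ^ 2) ht
  -- b = Fi - lam/2 * S
  have hb : b = Fi - lam / 2 * S := by
    rw [hbdef]
    have : (fun x : EuclideanSpace ℝ (Fin N) => G (u x))
        = fun x => F (u x) - lam / 2 * (u x) ^ 2 := funext fun x => hG (u x)
    rw [this, integral_sub hFu (hsq.const_mul (lam / 2)), integral_const_mul]
  -- t₀
  set t₀ : ℝ := Real.sqrt (((N : ℝ) - 2) * a / (2 * (N : ℝ) * b)) with ht₀def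
  have ht₀ : 0 < t₀ := Real.sqrt_pos.2 (by positivity)
  have ht₀sq : t₀ ^ 2 = ((N : ℝ) - 2) * a / (2 * (N : ℝ) * b) :=
    Real.sq_sqrt (by positivity)
  have hkey : 2 * (N : ℝ) * b * t₀ ^ 2 = ((N : ℝ) - 2) * a := by
    rw [ht₀sq]; field_simp
  -- energy identity
  have hE : ∀ {t : ℝ}, 0 < t →
      ((1 : ℝ) / 2) *
          (∫ x, (‖fderiv ℝ (fun y => u (t⁻¹ • y)) x‖ ^ 2 + lam * (u (t⁻¹ • x)) ^ 2)) -
        (∫ x, F (u (t⁻¹ • x))) = (a / 2) * t ^ (N - 2) - b * t ^ N := by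
    intro t ht
    have hne : (t : ℝ)⁻¹ ≠ 0 := inv_ne_zero ht.ne'
    have I1 : Integrable (fun x : EuclideanSpace ℝ (Fin N) =>
        ‖fderiv ℝ (fun y => u (t⁻¹ • y)) x‖ ^ 2) := by
      have : (fun x : EuclideanSpace ℝ (Fin N) => ‖fderiv ℝ (fun y => u (t⁻¹ • y)) x‖ ^ 2)
          = fun x => (t⁻¹) ^ 2 * ‖fderiv ℝ u (t⁻¹ • x)‖ ^ 2 := funext (hkeyfun t)
      rw [this]
      exact (hgrad.comp_smul hne).const_mul _
    have I2 : Integrable (fun x : EuclideanSpace ℝ (Fin N) => lam * (u (t⁻¹ • x)) ^ 2) :=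
      (hsq.comp_smul hne).const_mul lam
    rw [integral_add I1 I2, integral_const_mul, hgradI ht, hSI ht, hFI ht,
      show Fi = b + lam / 2 * S from by linarith]
    ring
  refine ⟨t₀, ht₀, ?_, ?_, ?_, ?_⟩
  · rw [hgradI ht₀, hGI ht₀]
    have hp : t₀ ^ N = t₀ ^ (N - 2) * t₀ ^ 2 := by rw [← pow_add]; congr 1; omega
    rw [hp]
    linear_combination (-(t₀ ^ (N - 2))) * hkey
  · intro t ht hcon
    rw [hgradI ht, hGI ht] at hcon
    have hp : t ^ N = t ^ (N - 2) * t ^ 2 := by rw [← pow_add]; congr 1; omega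
    rw [hp] at hcon
    have h3 : t ^ (N - 2) * (((N : ℝ) - 2) * a) = t ^ (N - 2) * (2 * (N : ℝ) * b * t ^ 2) := by
      linear_combination hcon
    have h4 := mul_left_cancel₀ (pow_ne_zero (N - 2) ht.ne') h3
    have h5 : t ^ 2 = t₀ ^ 2 := by
      rw [ht₀sq]
      field_simp
      linarith
    rw [← Real.sqrt_sq ht.le, h5, Real.sqrt_sq ht₀.le]
  · exact ht₀sq
  · intro t ht hne
    rw [hE ht, hE ht₀]
    exact phi_strict_max hN hGpos ht₀ (by linarith) ht hne
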